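/- arXiv:1312.1476 — 2 statements merged into one kernel-verified Lean document; each statement's English description precedes it below -/
import Mathlib

section
/- With the setup of the coloured Hutchinson estimator (B symmetric, 𝒞 a partition of {1,…,n}, V^c supported on class c with i.i.d. Rademacher entries), the variance of the estimator ∑_{c ∈ 𝒞} (V^c)ᵀ B V^c equals 2 ∑_{c ∈ 𝒞} ∑_{i ≠ j, i,j ∈ c} B_{ij}², which is at most the variance 2 ∑_{i≠j} B_{ij}² of the uncoloured Hutchinson estimator. -/
open Matrix MeasureTheory ProbabilityTheory

section Aux
variable {Ω : Type*} [MeasurableSpace Ω] {μ : Measure Ω}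

lemma iIndepFun_precomp_inj {ι κ β : Type*} [mβ : MeasurableSpace β]
    {f : κ → Ω → β} (g : ι → κ) (hg : Function.Injective g)
    (h : iIndepFun f μ) :
    iIndepFun (fun i => f (g i)) μ := by
  classical
  rw [iIndepFun_iff] at h ⊢
  intro s f' hf'
  set F : κ → Set Ω := fun p => ⋂ i ∈ s.filter (fun i => g i = p), f' i with hF
  have hFg : ∀ i ∈ s, F (g i) = f' i := by
    intro i hi
    have hfil : s.filter (fun j => g j = g i) = {i} := by
      ext j
      simp only [Finset.mem_filter, Finset.mem_singleton]
      constructor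
      · rintro ⟨-, hj⟩; exact hg hj
      · rintro rfl; exact ⟨hi, rfl⟩
    show (⋂ j ∈ s.filter (fun j => g j = g i), f' j) = f' i
    rw [hfil]; simp
  have hmeasF : ∀ p ∈ s.image g, MeasurableSet[mβ.comap (f p)] (F p) := by
    intro p _
    apply MeasurableSet.biInter (Finset.countable_toSet _)
    intro i hi
    rw [Finset.mem_coe, Finset.mem_filter] at hi
    have := hf' i hi.1
    rwa [hi.2] at this
  have key := h (s.image g) hmeasF
  have hinter : (⋂ p ∈ s.image g, F p) = ⋂ i ∈ s, f' i := by
    ext ω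
    simp only [Set.mem_iInter, hF, Finset.mem_image, Finset.mem_filter]
    constructor
    · intro hw i hi
      exact hw (g i) ⟨i, hi, rfl⟩ i ⟨hi, rfl⟩
    · rintro hw p ⟨i, hi, rfl⟩ j ⟨hj, -⟩
      exact hw j hj
  rw [hinter, Finset.prod_image (fun a _ b _ hab => hg hab)] at key
  rw [key]
  exact Finset.prod_congr rfl fun i hi => by rw [hFg i hi]

variable [IsProbabilityMeasure μ] {n : ℕ} {W : Fin n → Ω → ℝ}

lemma my_prod_integral (hWm : ∀ i, Measurable (W i))
    (hind : iIndepFun W μ) (s : Finset (Fin n)) :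
    ∫ ω, ∏ i ∈ s, W i ω ∂μ = ∏ i ∈ s, ∫ ω, W i ω ∂μ := by
  classical
  induction s using Finset.induction with
  | empty => simp
  | @insert a s ha ih =>
    have hfun : Measurable (∏ j ∈ s, W j) := by
      have : (∏ j ∈ s, W j) = fun ω => ∏ j ∈ s, W j ω := by funext ω; simp
      rw [this]; exact Finset.measurable_prod s fun i _ => hWm i
    have hI : IndepFun (W a) (∏ j ∈ s, W j) μ :=
      (hind.indepFun_finsetProd_of_notMem hWm ha).symm
    have := hI.integral_mul_eq_mul_integral (hWm a).aestronglyMeasurable hfun.aestronglyMeasurable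
    simp only [Finset.prod_insert ha]
    rw [← ih]
    calc ∫ ω, W a ω * ∏ i ∈ s, W i ω ∂μ
        = ∫ ω, (W a * ∏ j ∈ s, W j) ω ∂μ := by
          refine integral_congr_ae (Filter.Eventually.of_forall fun ω => ?_)
          simp [Finset.prod_apply]
      _ = (∫ ω, W a ω ∂μ) * ∫ ω, (∏ j ∈ s, W j) ω ∂μ := this
      _ = (∫ ω, W a ω ∂μ) * ∫ ω, ∏ i ∈ s, W i ω ∂μ := by
          congr 1
          refine integral_congr_ae (Filter.Eventually.of_forall fun ω => ?_)
          simp [Finset.prod_apply]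

omit [IsProbabilityMeasure μ] in
lemma my_pair_integral (hWm : ∀ i, Measurable (W i))
    (hind : iIndepFun W μ)
    (hmean : ∀ i, ∫ ω, W i ω ∂μ = 0) {i j : Fin n} (hij : i ≠ j) :
    ∫ ω, W i ω * W j ω ∂μ = 0 := by
  have := (hind.indepFun hij).integral_mul_eq_mul_integral (hWm i).aestronglyMeasurable
    (hWm j).aestronglyMeasurable
  calc ∫ ω, W i ω * W j ω ∂μ = integral μ (W i * W j) := rfl
    _ = (∫ ω, W i ω ∂μ) * ∫ ω, W j ω ∂μ := this
    _ = 0 := by rw [hmean i, hmean j]; ring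

lemma my_quad_integral (hWm : ∀ i, Measurable (W i))
    (hind : iIndepFun W μ)
    (hsq : ∀ᵐ ω ∂μ, ∀ i, W i ω * W i ω = 1)
    (hmean : ∀ i, ∫ ω, W i ω ∂μ = 0)
    (i j k l : Fin n) (hij : i ≠ j) (hkl : k ≠ l) :
    ∫ ω, W i ω * W j ω * (W k ω * W l ω) ∂μ =
      if (i = k ∧ j = l) ∨ (i = l ∧ j = k) then 1 else 0 := by
  classical
  by_cases hik : i = k
  · subst hik
    by_cases hjl : j = l
    · subst hjl
      rw [if_pos (Or.inl ⟨rfl, rfl⟩)]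
      have hae : (fun ω => W i ω * W j ω * (W i ω * W j ω)) =ᵐ[μ] fun _ => (1:ℝ) := by
        filter_upwards [hsq] with ω hω
        have : W i ω * W j ω * (W i ω * W j ω) = (W i ω * W i ω) * (W j ω * W j ω) := by ring
        rw [this, hω i, hω j]; ring
      rw [integral_congr_ae hae]; simp
    · rw [if_neg (by rintro (⟨-, h⟩ | ⟨h, -⟩); exact hjl h; exact hkl h)]
      have hae : (fun ω => W i ω * W j ω * (W i ω * W l ω)) =ᵐ[μ] fun ω => W j ω * W l ω := by
        filter_upwards [hsq] with ω hω
        have : W i ω * W j ω * (W i ω * W l ω) = (W i ω * W i ω) * (W j ω * W l ω) := by ring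
        rw [this, hω i]; ring
      rw [integral_congr_ae hae, my_pair_integral hWm hind hmean hjl]
  · by_cases hil : i = l
    · subst hil
      by_cases hjk : j = k
      · subst hjk
        rw [if_pos (Or.inr ⟨rfl, rfl⟩)]
        have hae : (fun ω => W i ω * W j ω * (W j ω * W i ω)) =ᵐ[μ] fun _ => (1:ℝ) := by
          filter_upwards [hsq] with ω hω
          have : W i ω * W j ω * (W j ω * W i ω) = (W i ω * W i ω) * (W j ω * W j ω) := by ring
          rw [this, hω i, hω j]; ring
        rw [integral_congr_ae hae]; simp
      · rw [if_neg (by rintro (⟨h, -⟩ | ⟨-, h⟩); exact hik h; exact hjk h)]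
        have hae : (fun ω => W i ω * W j ω * (W k ω * W i ω)) =ᵐ[μ] fun ω => W j ω * W k ω := by
          filter_upwards [hsq] with ω hω
          have : W i ω * W j ω * (W k ω * W i ω) = (W i ω * W i ω) * (W j ω * W k ω) := by ring
          rw [this, hω i]; ring
        rw [integral_congr_ae hae, my_pair_integral hWm hind hmean hjk]
    · by_cases hjk : j = k
      · subst hjk
        rw [if_neg (by rintro (⟨h, -⟩ | ⟨h, -⟩); exact hik h; exact hil h)]
        have hae : (fun ω => W i ω * W j ω * (W j ω * W l ω)) =ᵐ[μ] fun ω => W i ω * W l ω := by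
          filter_upwards [hsq] with ω hω
          have : W i ω * W j ω * (W j ω * W l ω) = (W j ω * W j ω) * (W i ω * W l ω) := by ring
          rw [this, hω j]; ring
        rw [integral_congr_ae hae, my_pair_integral hWm hind hmean hil]
      · by_cases hjl : j = l
        · subst hjl
          rw [if_neg (by rintro (⟨h, -⟩ | ⟨h, -⟩); exact hik h; exact hil h)]
          have hae : (fun ω => W i ω * W j ω * (W k ω * W j ω)) =ᵐ[μ] fun ω => W i ω * W k ω := by
            filter_upwards [hsq] with ω hω
            have : W i ω * W j ω * (W k ω * W j ω) = (W j ω * W j ω) * (W i ω * W k ω) := by ring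
            rw [this, hω j]; ring
          rw [integral_congr_ae hae, my_pair_integral hWm hind hmean hik]
        · rw [if_neg (by rintro (⟨h, -⟩ | ⟨h, -⟩); exact hik h; exact hil h)]
          have hset : (fun ω => W i ω * W j ω * (W k ω * W l ω)) =
              fun ω => ∏ t ∈ ({i, j, k, l} : Finset (Fin n)), W t ω := by
            funext ω
            rw [show ({i, j, k, l} : Finset (Fin n)) = insert i (insert j (insert k {l})) from rfl]
            rw [Finset.prod_insert (by simp [hij, hik, hil]),
              Finset.prod_insert (by simp [hjk, hjl]),
              Finset.prod_insert (by simp [hkl]), Finset.prod_singleton]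
            ring
          rw [hset, my_prod_integral hWm hind]
          exact Finset.prod_eq_zero (Finset.mem_insert_self i _) (hmean i)

end Aux

/-- the variance of the coloured Hutchinson estimator
`∑_c (V^c)ᵀ B V^c` equals `2 ∑_c ∑_{i≠j ∈ c} B_{ij}²`, which is at most the variance
`2 ∑_{i≠j} B_{ij}²` of the uncoloured Hutchinson estimator.  The partition is encoded
by a surjective colouring `col : Fin n → K`. -/
theorem stmt_8 {n : ℕ} (B : Matrix (Fin n) (Fin n) ℝ) (hB : B.IsSymm)
    {K : Type*} [Fintype K] [DecidableEq K] (col : Fin n → K) (hcol : Function.Surjective col)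
    {Ω : Type*} [MeasurableSpace Ω] (μ : Measure Ω) [IsProbabilityMeasure μ]
    (V : K → Ω → Fin n → ℝ)
    (hmeas : ∀ k i, Measurable fun ω => V k ω i)
    (hsupp : ∀ k i, col i ≠ k → ∀ ω, V k ω i = 0)
    (hindep : iIndepFun
      (fun (p : K × Fin n) ω => V p.1 ω p.2) μ)
    (hrad : ∀ i, ∀ᵐ ω ∂μ, V (col i) ω i = 1 ∨ V (col i) ω i = -1)
    (hmean : ∀ i, ∫ ω, V (col i) ω i ∂μ = 0) :
    variance (fun ω => ∑ k : K, dotProduct (V k ω) (B.mulVec (V k ω))) μ =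
      2 * ∑ i, ∑ j, (if i ≠ j ∧ col i = col j then (B i j) ^ 2 else 0) ∧
    2 * ∑ i, ∑ j, (if i ≠ j ∧ col i = col j then (B i j) ^ 2 else 0) ≤
      2 * ∑ i, ∑ j, (if i ≠ j then (B i j) ^ 2 else 0) := by
  classical
  constructor
  · -- main variance computation
    set W : Fin n → Ω → ℝ := fun i ω => V (col i) ω i with hWdef
    set c : Fin n → Fin n → ℝ := fun i j => if col i = col j then B i j else 0 with hcdef
    have hWm : ∀ i, Measurable (W i) := fun i => hmeas (col i) i
    have hWind : iIndepFun W μ :=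
      iIndepFun_precomp_inj (fun i => ((col i, i) : K × Fin n))
        (fun a b hab => congrArg Prod.snd hab) hindep
    have hWmean : ∀ i, ∫ ω, W i ω ∂μ = 0 := hmean
    have hsq : ∀ᵐ ω ∂μ, ∀ i, W i ω * W i ω = 1 := by
      rw [MeasureTheory.ae_all_iff]
      intro i
      filter_upwards [hrad i] with ω hω
      show V (col i) ω i * V (col i) ω i = 1
      rcases hω with h | h <;> rw [h] <;> norm_num
    have hWb : ∀ i, ∀ᵐ ω ∂μ, ‖W i ω‖ ≤ 1 := by
      intro i
      filter_upwards [hrad i] with ω hω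
      show ‖V (col i) ω i‖ ≤ 1
      rcases hω with h | h <;> rw [h] <;> norm_num
    have hcsymm : ∀ i j, c j i = c i j := by
      intro i j
      simp only [hcdef]
      by_cases h : col i = col j
      · rw [if_pos h.symm, if_pos h, hB.apply]
      · rw [if_neg (fun hh => h hh.symm), if_neg h]
    -- pointwise formula for the estimator
    have hXeq : ∀ ω, (∑ k : K, dotProduct (V k ω) (B.mulVec (V k ω))) =
        ∑ p : Fin n × Fin n, c p.1 p.2 * (W p.1 ω * W p.2 ω) := by
      intro ω
      rw [Fintype.sum_prod_type]
      simp only [dotProduct, Matrix.mulVec, Finset.mul_sum]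
      rw [Finset.sum_comm]
      refine Finset.sum_congr rfl fun i _ => ?_
      rw [Finset.sum_comm]
      refine Finset.sum_congr rfl fun j _ => ?_
      rw [Finset.sum_eq_single (col i)]
      · by_cases h : col i = col j
        · show V (col i) ω i * (B i j * V (col i) ω j) = c i j * (V (col i) ω i * V (col j) ω j)
          rw [hcdef]
          simp only [if_pos h]
          rw [← h]; ring
        · have h2 : V (col i) ω j = 0 := hsupp (col i) j (fun hh => h hh.symm) ω
          show V (col i) ω i * (B i j * V (col i) ω j) = c i j * (V (col i) ω i * V (col j) ω j)
          rw [h2, hcdef]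
          simp only [if_neg h]
          ring
      · intro k _ hk
        rw [hsupp k i (Ne.symm hk) ω]; ring
      · intro h; exact absurd (Finset.mem_univ _) h
    -- integrability facts
    have hint2 : ∀ i j, Integrable (fun ω => W i ω * W j ω) μ := by
      intro i j
      refine Integrable.mono' (integrable_const 1)
        (((hWm i).mul (hWm j)).aestronglyMeasurable) ?_
      filter_upwards [hWb i, hWb j] with ω h1 h2
      have h0i := norm_nonneg (W i ω)
      have h0j := norm_nonneg (W j ω)
      calc ‖W i ω * W j ω‖ = ‖W i ω‖ * ‖W j ω‖ := norm_mul _ _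
        _ ≤ 1 := by nlinarith
    have hint4 : ∀ i j k l, Integrable (fun ω => W i ω * W j ω * (W k ω * W l ω)) μ := by
      intro i j k l
      refine Integrable.mono' (integrable_const 1)
        ((((hWm i).mul (hWm j)).mul ((hWm k).mul (hWm l))).aestronglyMeasurable) ?_
      filter_upwards [hWb i, hWb j, hWb k, hWb l] with ω h1 h2 h3 h4
      have h0i := norm_nonneg (W i ω)
      have h0j := norm_nonneg (W j ω)
      have h0k := norm_nonneg (W k ω)
      have h0l := norm_nonneg (W l ω)
      calc ‖W i ω * W j ω * (W k ω * W l ω)‖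
          = ‖W i ω‖ * ‖W j ω‖ * (‖W k ω‖ * ‖W l ω‖) := by rw [norm_mul, norm_mul, norm_mul]
        _ ≤ 1 := mul_le_one₀ (mul_le_one₀ h1 h0j h2) (mul_nonneg h0k h0l)
            (mul_le_one₀ h3 h0l h4)
    -- expected value of each pair term
    have hWW1 : ∀ i : Fin n, ∫ ω, W i ω * W i ω ∂μ = 1 := by
      intro i
      have h1 : (fun ω => W i ω * W i ω) =ᵐ[μ] fun _ => (1:ℝ) :=
        hsq.mono fun ω hω => hω i
      rw [integral_congr_ae h1]; simp
    have hpair : ∀ p : Fin n × Fin n,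
        ∫ ω, c p.1 p.2 * (W p.1 ω * W p.2 ω) ∂μ = if p.1 = p.2 then c p.1 p.2 else 0 := by
      intro p
      rw [integral_const_mul]
      by_cases h : p.1 = p.2
      · rw [if_pos h, ← h, hWW1 p.1, mul_one]
      · rw [if_neg h, my_pair_integral hWm hWind hWmean h, mul_zero]
    set X : Ω → ℝ := fun ω => ∑ p : Fin n × Fin n, c p.1 p.2 * (W p.1 ω * W p.2 ω) with hXdef
    set T : ℝ := ∑ p : Fin n × Fin n, if p.1 = p.2 then c p.1 p.2 else 0 with hTdef
    have hEX : ∫ ω, X ω ∂μ = T := by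
      rw [hXdef]
      rw [integral_finset_sum _ (fun p _ => (hint2 p.1 p.2).const_mul _)]
      exact Finset.sum_congr rfl fun p _ => hpair p
    have hXmem : MemLp X 2 μ := by
      refine MemLp.of_bound ?_ (∑ p : Fin n × Fin n, |c p.1 p.2|) ?_
      · exact (Finset.measurable_sum _
          fun p _ => (((hWm p.1).mul (hWm p.2)).const_mul _)).aestronglyMeasurable
      · have hb : ∀ᵐ ω ∂μ, ∀ i, ‖W i ω‖ ≤ 1 := MeasureTheory.ae_all_iff.2 hWb
        filter_upwards [hb] with ω hω
        calc ‖X ω‖ ≤ ∑ p : Fin n × Fin n, ‖c p.1 p.2 * (W p.1 ω * W p.2 ω)‖ :=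
              norm_sum_le _ _
          _ ≤ ∑ p : Fin n × Fin n, |c p.1 p.2| := by
              refine Finset.sum_le_sum fun p _ => ?_
              have h1 := hω p.1
              have h2 := hω p.2
              have h0i := norm_nonneg (W p.1 ω)
              have h0j := norm_nonneg (W p.2 ω)
              have habs := abs_nonneg (c p.1 p.2)
              calc ‖c p.1 p.2 * (W p.1 ω * W p.2 ω)‖
                  = |c p.1 p.2| * (‖W p.1 ω‖ * ‖W p.2 ω‖) := by
                    rw [norm_mul, norm_mul, Real.norm_eq_abs]
                _ ≤ |c p.1 p.2| := mul_le_of_le_one_right habs (mul_le_one₀ h1 h0j h2)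
    -- off-diagonal part
    set g : Fin n × Fin n → Ω → ℝ :=
      fun p ω => if p.1 = p.2 then 0 else c p.1 p.2 * (W p.1 ω * W p.2 ω) with hgdef
    have hXsub : ∀ᵐ ω ∂μ, X ω - T = ∑ p : Fin n × Fin n, g p ω := by
      filter_upwards [hsq] with ω hω
      rw [hXdef, hTdef]
      rw [← Finset.sum_sub_distrib]
      refine Finset.sum_congr rfl fun p _ => ?_
      by_cases h : p.1 = p.2
      · have hz : g p ω = 0 := by simp [hgdef, h]
        rw [hz, if_pos h, ← h, hω p.1, mul_one, sub_self]
      · simp only [hgdef, if_neg h, sub_zero]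
    -- variance = ∫ (∑ g)²
    have hvar : variance X μ = ∫ ω, (∑ p : Fin n × Fin n, g p ω) ^ 2 ∂μ := by
      rw [variance_eq_integral hXmem.aemeasurable]
      refine integral_congr_ae ?_
      filter_upwards [hXsub] with ω hω
      rw [hEX, hω]
    -- compute ∫ g p * g q
    have hgint : ∀ p q : Fin n × Fin n, ∫ ω, g p ω * g q ω ∂μ =
        if p.1 = p.2 ∨ q.1 = q.2 then 0 else
          c p.1 p.2 * c q.1 q.2 *
            (if (p.1 = q.1 ∧ p.2 = q.2) ∨ (p.1 = q.2 ∧ p.2 = q.1) then 1 else 0) := by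
      intro p q
      by_cases hp : p.1 = p.2
      · rw [if_pos (Or.inl hp)]
        have hz : (fun ω => g p ω * g q ω) = fun _ => (0:ℝ) := by
          funext ω; simp [hgdef, hp]
        rw [hz]; simp
      · by_cases hq : q.1 = q.2
        · rw [if_pos (Or.inr hq)]
          have hz : (fun ω => g p ω * g q ω) = fun _ => (0:ℝ) := by
            funext ω; simp [hgdef, hq]
          rw [hz]; simp
        · rw [if_neg (by tauto)]
          have heq : (fun ω => g p ω * g q ω) = fun ω =>
              c p.1 p.2 * c q.1 q.2 * (W p.1 ω * W p.2 ω * (W q.1 ω * W q.2 ω)) := by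
            funext ω
            simp only [hgdef, if_neg hp, if_neg hq]
            ring
          rw [heq, integral_const_mul, my_quad_integral hWm hWind hsq hWmean _ _ _ _ hp hq]
    have hggint : ∀ p q : Fin n × Fin n, Integrable (fun ω => g p ω * g q ω) μ := by
      intro p q
      by_cases hp : p.1 = p.2
      · have : (fun ω => g p ω * g q ω) = fun _ => (0:ℝ) := by
          funext ω; simp [hgdef, hp]
        rw [this]; exact integrable_const 0
      · by_cases hq : q.1 = q.2
        · have : (fun ω => g p ω * g q ω) = fun _ => (0:ℝ) := by
            funext ω; simp [hgdef, hq]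
          rw [this]; exact integrable_const 0
        · have heq : (fun ω => g p ω * g q ω) = fun ω =>
              c p.1 p.2 * c q.1 q.2 * (W p.1 ω * W p.2 ω * (W q.1 ω * W q.2 ω)) := by
            funext ω
            simp only [hgdef, if_neg hp, if_neg hq]
            ring
          rw [heq]
          exact (hint4 p.1 p.2 q.1 q.2).const_mul _
    -- expand the square
    have hsqint : ∫ ω, (∑ p : Fin n × Fin n, g p ω) ^ 2 ∂μ =
        ∑ p : Fin n × Fin n, ∑ q : Fin n × Fin n, ∫ ω, g p ω * g q ω ∂μ := by
      have hexp : ∀ ω : Ω, (∑ p : Fin n × Fin n, g p ω) ^ 2 =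
          ∑ p : Fin n × Fin n, ∑ q : Fin n × Fin n, g p ω * g q ω := by
        intro ω
        rw [sq, Finset.sum_mul_sum]
      simp only [hexp]
      rw [integral_finset_sum _ (fun p _ => integrable_finset_sum _ (fun q _ => hggint p q))]
      exact Finset.sum_congr rfl fun p _ =>
        integral_finset_sum _ (fun q _ => hggint p q)
    -- evaluate the double sum
    have hdouble : (∑ p : Fin n × Fin n, ∑ q : Fin n × Fin n, ∫ ω, g p ω * g q ω ∂μ) =
        ∑ p : Fin n × Fin n, (if p.1 = p.2 then 0 else 2 * c p.1 p.2 ^ 2) := by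
      refine Finset.sum_congr rfl fun p _ => ?_
      by_cases hp : p.1 = p.2
      · rw [if_pos hp]
        refine Finset.sum_eq_zero fun q _ => ?_
        rw [hgint p q, if_pos (Or.inl hp)]
      · rw [if_neg hp]
        have hkey : ∀ q : Fin n × Fin n, ∫ ω, g p ω * g q ω ∂μ =
            (if q = p then c p.1 p.2 * c p.1 p.2 else 0) +
            (if q = (p.2, p.1) then c p.1 p.2 * c p.2 p.1 else 0) := by
          intro q
          rw [hgint p q]
          by_cases hq : q.1 = q.2
          · have e1 : ¬ q = p := fun h => hp (by rw [← h]; exact hq)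
            have e2 : ¬ q = (p.2, p.1) := fun h =>
              hp (((congrArg Prod.snd h).symm.trans hq.symm).trans (congrArg Prod.fst h))
            rw [if_pos (Or.inr hq), if_neg e1, if_neg e2]
            norm_num
          · have hor : ¬(p.1 = p.2 ∨ q.1 = q.2) := by tauto
            rw [if_neg hor]
            by_cases h1 : q = p
            · have hi : p.1 = q.1 ∧ p.2 = q.2 := ⟨by rw [h1], by rw [h1]⟩
              have e2 : ¬ q = (p.2, p.1) := fun h =>
                hp (congrArg Prod.fst (h1.symm.trans h))
              rw [if_pos (Or.inl hi), if_pos h1, if_neg e2, h1]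
              ring
            · by_cases h2 : q = (p.2, p.1)
              · have hi : p.1 = q.2 ∧ p.2 = q.1 :=
                  ⟨by rw [h2], by rw [h2]⟩
                rw [if_pos (Or.inr hi), if_neg h1, if_pos h2, ← hi.1, ← hi.2]
                ring
              · have hi : ¬((p.1 = q.1 ∧ p.2 = q.2) ∨ (p.1 = q.2 ∧ p.2 = q.1)) := by
                  rintro (⟨ha, hb⟩ | ⟨ha, hb⟩)
                  · exact h1 (Prod.ext ha.symm hb.symm)
                  · exact h2 (Prod.ext hb.symm ha.symm)
                rw [if_neg hi, if_neg h1, if_neg h2]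
                ring
        simp only [hkey]
        rw [Finset.sum_add_distrib, Finset.sum_ite_eq' Finset.univ p, Finset.sum_ite_eq'
          Finset.univ ((p.2, p.1) : Fin n × Fin n)]
        simp only [Finset.mem_univ, if_pos]
        rw [hcsymm p.1 p.2]
        ring
    -- put it together
    have hfe : (fun ω => ∑ k : K, dotProduct (V k ω) (B.mulVec (V k ω))) = X := by
      funext ω; exact hXeq ω
    rw [hfe, hvar, hsqint, hdouble]
    -- final combinatorial identity
    rw [Fintype.sum_prod_type, Finset.mul_sum]
    refine Finset.sum_congr rfl fun i _ => ?_
    rw [Finset.mul_sum]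
    refine Finset.sum_congr rfl fun j _ => ?_
    by_cases h1 : i = j
    · simp [h1]
    · by_cases h2 : col i = col j
      · rw [if_neg h1, if_pos (show (i ≠ j ∧ col i = col j) from ⟨h1, h2⟩)]
        simp only [hcdef, if_pos h2]
        try ring
      · rw [if_neg h1, if_neg (show ¬(i ≠ j ∧ col i = col j) from fun hh => h2 hh.2)]
        simp only [hcdef, if_neg h2]
        try ring
  · -- monotonicity part
    refine mul_le_mul_of_nonneg_left ?_ (by norm_num)
    refine Finset.sum_le_sum fun i _ => Finset.sum_le_sum fun j _ => ?_
    by_cases h1 : i = j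
    · simp [h1]
    · by_cases h2 : col i = col j
      · rw [if_pos ⟨h1, h2⟩, if_pos h1]
      · rw [if_neg (fun hh => h2 hh.2), if_pos h1]
        positivity
end

section
/- Let A be symmetric positive definite and H symmetric positive semidefinite n×n matrices. Then the condition number of the preconditioned matrix A^{-1/2}(A + H)A^{-1/2} is at most 1 + tr(A^{-1}H); in particular, if tr(A^{-1}H) is bounded independently of n, then so is the condition number of the preconditioned system. -/
open Matrix

lemma trace_eq_sum_eigenvalues' {n : ℕ} {P : Matrix (Fin n) (Fin n) ℝ}
    (hP : P.IsHermitian) : P.trace = ∑ i, hP.eigenvalues i := by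
  conv_lhs => rw [hP.spectral_theorem, Unitary.conjStarAlgAut_apply]
  rw [Matrix.trace_mul_comm, ← mul_assoc]
  have : (star (hP.eigenvectorUnitary : Matrix (Fin n) (Fin n) ℝ)) *
      (hP.eigenvectorUnitary : Matrix (Fin n) (Fin n) ℝ) = 1 :=
    (Matrix.mem_unitaryGroup_iff').mp (hP.eigenvectorUnitary).2
  rw [this, one_mul, Matrix.trace_diagonal]
  simp

/-- for A symmetric positive definite and H symmetric positive
semidefinite, the condition number (ratio of any two eigenvalues, in particular of the
largest and smallest) of the preconditioned matrix `A^{-1/2}(A+H)A^{-1/2}` is at most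
`1 + tr(A⁻¹H)`. -/
theorem stmt_14 {n : ℕ} (A H S : Matrix (Fin n) (Fin n) ℝ)
    (hA : A.PosDef) (hH : H.PosSemidef) (hS : S.PosDef) (hSA : S * S = A) :
    ∀ μ ∈ spectrum ℝ (S⁻¹ * (A + H) * S⁻¹), ∀ ν ∈ spectrum ℝ (S⁻¹ * (A + H) * S⁻¹),
      μ / ν ≤ 1 + (A⁻¹ * H).trace := by
  have hSdet : IsUnit S.det := isUnit_iff_ne_zero.mpr hS.det_pos.ne'
  have hSinv : S⁻¹ * S = 1 := Matrix.nonsing_inv_mul S hSdet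
  have hSinv' : S * S⁻¹ = 1 := Matrix.mul_nonsing_inv S hSdet
  -- S⁻¹ is Hermitian
  have hSH : (S⁻¹).IsHermitian := hS.isHermitian.inv
  set P : Matrix (Fin n) (Fin n) ℝ := S⁻¹ * H * S⁻¹ with hPdef
  have hP : P.PosSemidef := by
    have := hH.mul_mul_conjTranspose_same (S⁻¹)
    rwa [hSH.eq] at this
  -- key identity
  have key : S⁻¹ * (A + H) * S⁻¹ = 1 + P := by
    rw [← hSA]
    rw [Matrix.mul_add, Matrix.add_mul]
    congr 1
    rw [← mul_assoc, mul_assoc (S⁻¹ * S), hSinv, one_mul, hSinv']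
  -- trace identity
  have htr : P.trace = (A⁻¹ * H).trace := by
    rw [hPdef, Matrix.trace_mul_cycle, ← Matrix.mul_inv_rev, hSA]
  have htr_nonneg : 0 ≤ P.trace := by
    rw [trace_eq_sum_eigenvalues' hP.isHermitian]
    exact Finset.sum_nonneg fun i _ => hP.eigenvalues_nonneg i
  -- each spectrum element μ of 1 + P satisfies 1 ≤ μ ≤ 1 + trace P
  have hspec : ∀ μ ∈ spectrum ℝ (S⁻¹ * (A + H) * S⁻¹), 1 ≤ μ ∧ μ ≤ 1 + P.trace := by
    intro μ hμ
    rw [key] at hμ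
    have h1 : μ - 1 ∈ spectrum ℝ P := by
      have : (1 : Matrix (Fin n) (Fin n) ℝ) + P = algebraMap ℝ _ (1 : ℝ) + P := by
        simp
      rw [this] at hμ
      have := (spectrum.add_mem_iff (a := algebraMap ℝ (Matrix (Fin n) (Fin n) ℝ) 1 + P)
        (r := μ - 1) (s := (1 : ℝ))).mp (by simpa using hμ)
      simpa using this
    rw [hP.isHermitian.spectrum_real_eq_range_eigenvalues] at h1
    obtain ⟨i, hi⟩ := h1
    constructor
    · have := hP.eigenvalues_nonneg i
      rw [hi] at this; linarith
    · have hle : hP.isHermitian.eigenvalues i ≤ P.trace := by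
        rw [trace_eq_sum_eigenvalues' hP.isHermitian]
        exact Finset.single_le_sum (fun j _ => hP.eigenvalues_nonneg j) (Finset.mem_univ i)
      rw [hi] at hle; linarith
  intro μ hμ ν hν
  obtain ⟨hμ1, hμ2⟩ := hspec μ hμ
  obtain ⟨hν1, _⟩ := hspec ν hν
  calc μ / ν ≤ μ / 1 := by
        apply div_le_div_of_nonneg_left (by linarith) (by norm_num) hν1
    _ = μ := div_one μ
    _ ≤ 1 + P.trace := hμ2
    _ = 1 + (A⁻¹ * H).trace := by rw [htr]
end
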